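/- Fix m, p, L, N ∈ ℕ, a data pair (u_d, y_d) of length T, an initial pair (u_ini, y_ini) of length T_ini, and a future input u_f : {0,…,T_f−1} → ℝ^m with T_f ≥ 1. Let ℓ ∈ ℕ be such that T_ini ≥ ℓ and ℓ(C',A') ≤ ℓ for every explaining system (n', A', B', C', D'). Suppose there exist y_f : {0,…,T_f−1} → ℝ^p and vectors g₁ ∈ ℝ^{T−ℓ−T_f+1} (this term present only if T ≥ ℓ+T_f, otherwise omitted) and g₂ ∈ ℝ^{T_ini−ℓ−T_f+1} (present only if T_ini ≥ ℓ+T_f, otherwise omitted) such that H_{ℓ+T_f}(u_d) g₁ + H_{ℓ+T_f}(u_ini) g₂ equals the stacked vector (u_ini(T_ini−ℓ), …, u_ini(T_ini−1), u_f(0), …, u_f(T_f−1)) and H_{ℓ+T_f}(y_d) g₁ + H_{ℓ+T_f}(y_ini) g₂ equals the stacked vector (y_ini(T_ini−ℓ), …, y_ini(T_ini−1), y_f(0), …, y_f(T_f−1)). Then for every explaining system (n', A', B', C', D'), the concatenation (u_ini·u_f, y_ini·y_f) is a trajectory of length T_ini+T_f of (A',B',C',D'), and moreover for each explaining system y_f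 is the unique output with this property; in particular (u_d, y_d) is informative for unique prediction of u_f from (u_ini, y_ini). -/

import Mathlib

/-- `(u, y)` is a trajectory of length `T` of the linear system `(A, B, C, D)`. -/
def IsTraj {n m p : ℕ} (A : Matrix (Fin n) (Fin n) ℝ) (B : Matrix (Fin n) (Fin m) ℝ)
    (C : Matrix (Fin p) (Fin n) ℝ) (D : Matrix (Fin p) (Fin m) ℝ)
    (T : ℕ) (u : Fin T → Fin m → ℝ) (y : Fin T → Fin p → ℝ) : Prop :=
  ∃ x : Fin (T + 1) → Fin n → ℝ,
    ∀ t : Fin T,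
      x t.succ = A.mulVec (x t.castSucc) + B.mulVec (u t) ∧
      y t = C.mulVec (x t.castSucc) + D.mulVec (u t)

/-- Observability matrix of depth `k` of the pair `(C, A)`. -/
noncomputable def obsMat {n p : ℕ} (A : Matrix (Fin n) (Fin n) ℝ)
    (C : Matrix (Fin p) (Fin n) ℝ) (k : ℕ) : Matrix (Fin k × Fin p) (Fin n) ℝ :=
  fun ir j => (C * A ^ (ir.1 : ℕ)) ir.2 j

/-- The lag of the pair `(C, A)`: the least `k` with `rank O_k = rank O_{k+1}`. -/
noncomputable def lag {n p : ℕ} (A : Matrix (Fin n) (Fin n) ℝ)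
    (C : Matrix (Fin p) (Fin n) ℝ) : ℕ :=
  sInf {k | (obsMat A C k).rank = (obsMat A C (k + 1)).rank}

/-- `(n', A', B', C', D')` is an explaining system for the data `(ud, yd)` and the
initial trajectory `(uini, yini)`, within the model class of order at most `N` and
lag at most `L`. -/
def Explaining {m p : ℕ} (L N T Tini : ℕ)
    (ud : Fin T → Fin m → ℝ) (yd : Fin T → Fin p → ℝ)
    (uini : Fin Tini → Fin m → ℝ) (yini : Fin Tini → Fin p → ℝ)
    {n' : ℕ} (A' : Matrix (Fin n') (Fin n') ℝ) (B' : Matrix (Fin n') (Fin m) ℝ)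
    (C' : Matrix (Fin p) (Fin n') ℝ) (D' : Matrix (Fin p) (Fin m) ℝ) : Prop :=
  n' ≤ N ∧ lag A' C' ≤ L ∧ IsTraj A' B' C' D' T ud yd ∧ IsTraj A' B' C' D' Tini uini yini

/-- The data `(ud, yd)` is informative for unique prediction of `uf` from
`(uini, yini)`: (i) every explaining system has exactly one response `yf` to `uf`
extending `(uini, yini)`, and (ii) some `yf` works for all explaining systems. -/
def Informative {m p : ℕ} (L N T Tini Tf : ℕ)
    (ud : Fin T → Fin m → ℝ) (yd : Fin T → Fin p → ℝ)
    (uini : Fin Tini → Fin m → ℝ) (yini : Fin Tini → Fin p → ℝ)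
    (uf : Fin Tf → Fin m → ℝ) : Prop :=
  (∀ (n' : ℕ) (A' : Matrix (Fin n') (Fin n') ℝ) (B' : Matrix (Fin n') (Fin m) ℝ)
      (C' : Matrix (Fin p) (Fin n') ℝ) (D' : Matrix (Fin p) (Fin m) ℝ),
      Explaining L N T Tini ud yd uini yini A' B' C' D' →
      ∃! yf : Fin Tf → Fin p → ℝ,
        IsTraj A' B' C' D' (Tini + Tf) (Fin.append uini uf) (Fin.append yini yf)) ∧
  (∃ yf : Fin Tf → Fin p → ℝ,
      ∀ (n' : ℕ) (A' : Matrix (Fin n') (Fin n') ℝ) (B' : Matrix (Fin n') (Fin m) ℝ)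
        (C' : Matrix (Fin p) (Fin n') ℝ) (D' : Matrix (Fin p) (Fin m) ℝ),
        Explaining L N T Tini ud yd uini yini A' B' C' D' →
        IsTraj A' B' C' D' (Tini + Tf) (Fin.append uini uf) (Fin.append yini yf))

namespace Pred

section LagPart

open Matrix Module

variable {n' p : ℕ} (A : Matrix (Fin n') (Fin n') ℝ) (C : Matrix (Fin p) (Fin n') ℝ)

noncomputable def K (k : ℕ) : Submodule ℝ (Fin n' → ℝ) :=
  LinearMap.ker (obsMat A C k).mulVecLin

lemma mem_K {k : ℕ} {v : Fin n' → ℝ} :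
    v ∈ K A C k ↔ ∀ i : Fin k, (C * A ^ (i : ℕ)).mulVec v = 0 := by
  simp only [K, LinearMap.mem_ker, Matrix.mulVecLin_apply]
  constructor
  · intro h i
    funext r
    have := congrFun h (i, r)
    simpa [Matrix.mulVec, obsMat, dotProduct] using this
  · intro h
    funext ir
    have := congrFun (h ir.1) ir.2
    simpa [Matrix.mulVec, obsMat, dotProduct] using this

lemma K_antitone : ∀ {a b : ℕ}, a ≤ b → K A C b ≤ K A C a := by
  intro a b hab v hv
  rw [mem_K] at hv ⊢
  intro i
  exact hv ⟨i, lt_of_lt_of_le i.2 hab⟩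

lemma rank_nullity (k : ℕ) :
    (obsMat A C k).rank + finrank ℝ (K A C k) = n' := by
  have := LinearMap.finrank_range_add_finrank_ker (obsMat A C k).mulVecLin
  rw [Module.finrank_fin_fun] at this
  exact this

lemma K_eq_of_rank_eq {k : ℕ} (h : (obsMat A C k).rank = (obsMat A C (k+1)).rank) :
    K A C (k+1) = K A C k := by
  have h1 := rank_nullity A C k
  have h2 := rank_nullity A C (k+1)
  exact Submodule.eq_of_le_of_finrank_eq (K_antitone A C (Nat.le_succ k)) (by omega)

lemma rank_eq_of_K_eq {k : ℕ} (h : K A C (k+1) = K A C k) :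
    (obsMat A C k).rank = (obsMat A C (k+1)).rank := by
  have h1 := rank_nullity A C k
  have h2 := rank_nullity A C (k+1)
  rw [h] at h2
  omega

lemma K_step {k : ℕ} (h : K A C (k+1) = K A C k) : K A C (k+2) = K A C (k+1) := by
  refine le_antisymm (K_antitone A C (Nat.le_succ _)) ?_
  intro v hv
  have hAv : A.mulVec v ∈ K A C (k+1) := by
    rw [h, mem_K]
    intro i
    rw [Matrix.mulVec_mulVec, Matrix.mul_assoc, ← pow_succ]
    exact (mem_K A C).mp hv ⟨(i : ℕ)+1, by omega⟩
  rw [mem_K]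
  intro i
  rcases Nat.lt_or_ge (i : ℕ) (k+1) with hi | hi
  · exact (mem_K A C).mp hv ⟨i, hi⟩
  · have : (i : ℕ) = k + 1 := by omega
    rw [this, pow_succ, ← Matrix.mul_assoc, ← Matrix.mulVec_mulVec]
    exact (mem_K A C).mp hAv ⟨k, by omega⟩

lemma exists_stab : ∃ k, (obsMat A C k).rank = (obsMat A C (k+1)).rank := by
  by_contra hc
  push_neg at hc
  have hlt : ∀ k, (obsMat A C (k+1)).rank > (obsMat A C k).rank := by
    intro k
    have hle : finrank ℝ (K A C (k+1)) ≤ finrank ℝ (K A C k) :=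
      Submodule.finrank_mono (K_antitone A C (Nat.le_succ k))
    have h1 := rank_nullity A C k
    have h2 := rank_nullity A C (k+1)
    have := hc k
    omega
  have hk : ∀ k, k ≤ (obsMat A C k).rank := by
    intro k
    induction k with
    | zero => omega
    | succ k ih => have := hlt k; omega
  have := hk (n'+1)
  have := (obsMat A C (n'+1)).rank_le_card_width
  simp at this
  omega

lemma lag_mem : K A C (lag A C + 1) = K A C (lag A C) :=
  K_eq_of_rank_eq A C (Nat.sInf_mem (exists_stab A C))

lemma K_stab' : ∀ j, K A C (lag A C + j + 1) = K A C (lag A C + j) := by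
  intro j
  induction j with
  | zero => exact lag_mem A C
  | succ j ih => exact K_step A C ih

lemma K_stab : ∀ j, K A C (lag A C + j) = K A C (lag A C) := by
  intro j
  induction j with
  | zero => rfl
  | succ j ih => rw [← Nat.add_assoc, K_stab' A C j, ih]

lemma lag_spec {ℓ : ℕ} (hℓ : lag A C ≤ ℓ) {v : Fin n' → ℝ}
    (hv : ∀ i < ℓ, (C * A ^ i).mulVec v = 0) :
    ∀ k, (C * A ^ k).mulVec v = 0 := by
  intro k
  have hvℓ : v ∈ K A C ℓ := by
    rw [mem_K]; intro i; exact hv i i.2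
  have hv0 : v ∈ K A C (lag A C) := K_antitone A C hℓ hvℓ
  have : v ∈ K A C (lag A C + (k+1)) := by rw [K_stab A C (k+1)]; exact hv0
  exact (mem_K A C).mp this ⟨k, by omega⟩

end LagPart

section TrajPart

open Matrix

lemma append_left' {α : Type*} {a b : ℕ} (f : Fin a → α) (g : Fin b → α)
    (i : Fin (a + b)) (h : (i : ℕ) < a) : Fin.append f g i = f ⟨i, h⟩ := by
  have e : Fin.castAdd b ⟨(i : ℕ), h⟩ = i := by ext; rfl
  conv_lhs => rw [← e]
  rw [Fin.append_left]

lemma append_right' {α : Type*} {a b : ℕ} (f : Fin a → α) (g : Fin b → α)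
    (i : Fin (a + b)) (h : a ≤ (i : ℕ)) :
    Fin.append f g i = g ⟨(i : ℕ) - a, by have := i.2; omega⟩ := by
  have e : Fin.natAdd a ⟨(i : ℕ) - a, by have := i.2; omega⟩ = i := by
    ext; simp; omega
  conv_lhs => rw [← e]
  rw [Fin.append_right]

variable {n' m p : ℕ} (A : Matrix (Fin n') (Fin n') ℝ) (B : Matrix (Fin n') (Fin m) ℝ)
  (C : Matrix (Fin p) (Fin n') ℝ) (D : Matrix (Fin p) (Fin m) ℝ)

def NTraj (T : ℕ) (u : ℕ → Fin m → ℝ) (y : ℕ → Fin p → ℝ) : Prop :=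
  ∃ x : ℕ → Fin n' → ℝ, ∀ t < T,
    x (t + 1) = A.mulVec (x t) + B.mulVec (u t) ∧
    y t = C.mulVec (x t) + D.mulVec (u t)

lemma isTraj_of_nTraj {T : ℕ} {u : Fin T → Fin m → ℝ} {y : Fin T → Fin p → ℝ}
    {u' : ℕ → Fin m → ℝ} {y' : ℕ → Fin p → ℝ}
    (hu : ∀ t : Fin T, u' t = u t) (hy : ∀ t : Fin T, y' t = y t)
    (h : NTraj A B C D T u' y') : IsTraj A B C D T u y := by
  obtain ⟨x, hx⟩ := h
  refine ⟨fun t => x t, fun t => ?_⟩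
  obtain ⟨h1, h2⟩ := hx t t.2
  rw [hu t] at h1 h2
  rw [hy t] at h2
  exact ⟨h1, h2⟩

lemma nTraj_of_isTraj {T : ℕ} {u : Fin T → Fin m → ℝ} {y : Fin T → Fin p → ℝ}
    {u' : ℕ → Fin m → ℝ} {y' : ℕ → Fin p → ℝ}
    (hu : ∀ t : Fin T, u' t = u t) (hy : ∀ t : Fin T, y' t = y t)
    (h : IsTraj A B C D T u y) : NTraj A B C D T u' y' := by
  obtain ⟨x, hx⟩ := h
  refine ⟨fun t => if h : t < T + 1 then x ⟨t, h⟩ else 0, fun t ht => ?_⟩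
  have hu' : u' t = u ⟨t, ht⟩ := hu ⟨t, ht⟩
  have hy' : y' t = y ⟨t, ht⟩ := hy ⟨t, ht⟩
  obtain ⟨h1, h2⟩ := hx ⟨t, ht⟩
  dsimp only
  rw [dif_pos (show t + 1 < T + 1 by omega), dif_pos (show t < T + 1 by omega), hu', hy']
  exact ⟨h1, h2⟩

lemma out_unique {ℓ : ℕ}
    (hlag : ∀ v : Fin n' → ℝ, (∀ i < ℓ, (C * A ^ i).mulVec v = 0) →
      ∀ k, (C * A ^ k).mulVec v = 0)
    (T' t0 : ℕ) (ht0 : t0 + ℓ ≤ T')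
    (U U' : ℕ → Fin m → ℝ) (Y Y' : ℕ → Fin p → ℝ)
    (hUU : ∀ t < T', U t = U' t)
    (h1 : NTraj A B C D T' U Y) (h2 : NTraj A B C D T' U' Y')
    (hYY : ∀ t < t0 + ℓ, Y t = Y' t) :
    ∀ t < T', Y t = Y' t := by
  obtain ⟨x, hx⟩ := h1
  obtain ⟨x', hx'⟩ := h2
  set e0 : Fin n' → ℝ := x t0 - x' t0 with he0
  have hdiff : ∀ i, t0 + i ≤ T' → x (t0 + i) = x' (t0 + i) + (A ^ i).mulVec e0 := by
    intro i
    induction i with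
    | zero => intro _; simp [he0, Matrix.one_mulVec]
    | succ i ih =>
      intro hi
      have e1 := hx (t0 + i) (by omega)
      have e2 := hx' (t0 + i) (by omega)
      rw [show t0 + (i + 1) = t0 + i + 1 by omega, e1.1, e2.1, ih (by omega),
        hUU (t0 + i) (by omega), pow_succ', ← Matrix.mulVec_mulVec, Matrix.mulVec_add]
      abel
  have hC : ∀ i < ℓ, (C * A ^ i).mulVec e0 = 0 := by
    intro i hi
    have e1 := hx (t0 + i) (by omega)
    have e2 := hx' (t0 + i) (by omega)
    have hYt := hYY (t0 + i) (by omega)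
    have hUt := hUU (t0 + i) (by omega)
    have key : C.mulVec (x (t0 + i)) + D.mulVec (U (t0 + i)) =
        C.mulVec (x' (t0 + i)) + D.mulVec (U (t0 + i)) := by
      rw [← e1.2, hYt, e2.2, hUt]
    rw [hdiff i (by omega), Matrix.mulVec_add, Matrix.mulVec_mulVec] at key
    have : (C * A ^ i).mulVec e0 =
        (C.mulVec (x' (t0 + i)) + (C * A ^ i).mulVec e0 + D.mulVec (U (t0 + i))) -
        (C.mulVec (x' (t0 + i)) + D.mulVec (U (t0 + i))) := by abel
    rw [this, key]
    abel
  have hCall := hlag e0 hC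
  intro t ht
  rcases Nat.lt_or_ge t t0 with h' | h'
  · exact hYY t (by omega)
  · have hti : t = t0 + (t - t0) := by omega
    have e1 := hx t ht
    have e2 := hx' t ht
    rw [e1.2, e2.2, hUU t ht, hti, hdiff (t - t0) (by omega), Matrix.mulVec_add,
      Matrix.mulVec_mulVec, hCall]
    abel

lemma glue {ℓ Tini Tf : ℕ} (hTini : ℓ ≤ Tini)
    (hlag : ∀ v : Fin n' → ℝ, (∀ i < ℓ, (C * A ^ i).mulVec v = 0) →
      ∀ k, (C * A ^ k).mulVec v = 0)
    (uini' : ℕ → Fin m → ℝ) (yini' : ℕ → Fin p → ℝ)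
    (h1 : NTraj A B C D Tini uini' yini')
    (ubar : ℕ → Fin m → ℝ) (ybar : ℕ → Fin p → ℝ)
    (h2 : NTraj A B C D (ℓ + Tf) ubar ybar)
    (hmu : ∀ i < ℓ, ubar i = uini' (Tini - ℓ + i))
    (hmy : ∀ i < ℓ, ybar i = yini' (Tini - ℓ + i)) :
    NTraj A B C D (Tini + Tf)
      (fun t => if t < Tini then uini' t else ubar (ℓ + (t - Tini)))
      (fun t => if t < Tini then yini' t else ybar (ℓ + (t - Tini))) := by
  obtain ⟨x, hx⟩ := h1
  obtain ⟨xb, hxb⟩ := h2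
  set d0 : Fin n' → ℝ := x (Tini - ℓ) - xb 0 with hd0
  have hdiff : ∀ i, i ≤ ℓ → x (Tini - ℓ + i) = xb i + (A ^ i).mulVec d0 := by
    intro i
    induction i with
    | zero => intro _; simp [hd0, Matrix.one_mulVec]
    | succ i ih =>
      intro hi
      have e1 := hx (Tini - ℓ + i) (by omega)
      have e2 := hxb i (by omega)
      rw [show Tini - ℓ + (i + 1) = Tini - ℓ + i + 1 by omega, e1.1, e2.1, ih (by omega),
        ← hmu i (by omega), pow_succ', ← Matrix.mulVec_mulVec, Matrix.mulVec_add]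
      abel
  have hCd : ∀ k, (C * A ^ k).mulVec d0 = 0 := by
    refine hlag d0 ?_
    intro i hi
    have e1 := hx (Tini - ℓ + i) (by omega)
    have e2 := hxb i (by omega)
    have key : C.mulVec (x (Tini - ℓ + i)) + D.mulVec (uini' (Tini - ℓ + i)) =
        C.mulVec (xb i) + D.mulVec (uini' (Tini - ℓ + i)) := by
      rw [← e1.2, ← hmy i hi, e2.2, hmu i hi]
    rw [hdiff i (by omega), Matrix.mulVec_add, Matrix.mulVec_mulVec] at key
    have : (C * A ^ i).mulVec d0 =
        (C.mulVec (xb i) + (C * A ^ i).mulVec d0 + D.mulVec (uini' (Tini - ℓ + i))) -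
        (C.mulVec (xb i) + D.mulVec (uini' (Tini - ℓ + i))) := by abel
    rw [this, key]
    abel
  refine ⟨fun t => if t < Tini - ℓ then x t
    else xb (t - (Tini - ℓ)) + (A ^ (t - (Tini - ℓ))).mulVec d0, fun t ht => ?_⟩
  dsimp only
  by_cases hta : t + 1 ≤ Tini - ℓ
  · have hzt : (if t < Tini - ℓ then x t
        else xb (t - (Tini - ℓ)) + (A ^ (t - (Tini - ℓ))).mulVec d0) = x t :=
      if_pos (by omega)
    have hzt1 : (if t + 1 < Tini - ℓ then x (t + 1)
        else xb (t + 1 - (Tini - ℓ)) + (A ^ (t + 1 - (Tini - ℓ))).mulVec d0) = x (t + 1) := by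
      by_cases h' : t + 1 < Tini - ℓ
      · exact if_pos h'
      · have ht1 : t + 1 = Tini - ℓ := by omega
        rw [if_neg h', ht1, Nat.sub_self, pow_zero, Matrix.one_mulVec]
        have h0 := hdiff 0 (by omega)
        rw [Nat.add_zero, pow_zero, Matrix.one_mulVec] at h0
        exact h0.symm
    have e := hx t (by omega)
    rw [hzt, hzt1, if_pos (show t < Tini by omega), if_pos (show t < Tini by omega)]
    exact e
  · obtain ⟨i, rfl⟩ : ∃ i, t = Tini - ℓ + i := ⟨t - (Tini - ℓ), by omega⟩
    have hi : i < ℓ + Tf := by omega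
    have hzt : (if Tini - ℓ + i < Tini - ℓ then x (Tini - ℓ + i)
        else xb (Tini - ℓ + i - (Tini - ℓ)) + (A ^ (Tini - ℓ + i - (Tini - ℓ))).mulVec d0) =
        xb i + (A ^ i).mulVec d0 := by
      have hc1 : Tini - ℓ + i - (Tini - ℓ) = i := by omega
      rw [if_neg (by omega), hc1]
    have hzt1 : (if Tini - ℓ + i + 1 < Tini - ℓ then x (Tini - ℓ + i + 1)
        else xb (Tini - ℓ + i + 1 - (Tini - ℓ)) +
          (A ^ (Tini - ℓ + i + 1 - (Tini - ℓ))).mulVec d0) =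
        xb (i + 1) + (A ^ (i + 1)).mulVec d0 := by
      have hc1 : Tini - ℓ + i + 1 - (Tini - ℓ) = i + 1 := by omega
      rw [if_neg (by omega), hc1]
    have ex := hxb i hi
    have hU : (if Tini - ℓ + i < Tini then uini' (Tini - ℓ + i)
        else ubar (ℓ + (Tini - ℓ + i - Tini))) = ubar i := by
      by_cases h' : Tini - ℓ + i < Tini
      · rw [if_pos h', hmu i (by omega)]
      · have hc1 : ℓ + (Tini - ℓ + i - Tini) = i := by omega
        rw [if_neg h', hc1]
    have hY : (if Tini - ℓ + i < Tini then yini' (Tini - ℓ + i)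
        else ybar (ℓ + (Tini - ℓ + i - Tini))) = ybar i := by
      by_cases h' : Tini - ℓ + i < Tini
      · rw [if_pos h', hmy i (by omega)]
      · have hc1 : ℓ + (Tini - ℓ + i - Tini) = i := by omega
        rw [if_neg h', hc1]
    constructor
    · rw [hzt, hzt1, hU, ex.1, pow_succ', ← Matrix.mulVec_mulVec, Matrix.mulVec_add]
      abel
    · rw [hY, hzt, hU, ex.2, Matrix.mulVec_add, Matrix.mulVec_mulVec, hCd i]
      abel

lemma comb {T Tini ℓ Tf : ℕ} (g₁ : Fin (T + 1 - (ℓ + Tf)) → ℝ)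
    (g₂ : Fin (Tini + 1 - (ℓ + Tf)) → ℝ)
    (ud' : ℕ → Fin m → ℝ) (yd' : ℕ → Fin p → ℝ)
    (uini' : ℕ → Fin m → ℝ) (yini' : ℕ → Fin p → ℝ)
    (h1 : NTraj A B C D T ud' yd') (h2 : NTraj A B C D Tini uini' yini') :
    NTraj A B C D (ℓ + Tf)
      (fun t => (∑ j : Fin (T + 1 - (ℓ + Tf)), g₁ j • ud' (t + j)) +
        ∑ j : Fin (Tini + 1 - (ℓ + Tf)), g₂ j • uini' (t + j))
      (fun t => (∑ j : Fin (T + 1 - (ℓ + Tf)), g₁ j • yd' (t + j)) +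
        ∑ j : Fin (Tini + 1 - (ℓ + Tf)), g₂ j • yini' (t + j)) := by
  obtain ⟨x1, hx1⟩ := h1
  obtain ⟨x2, hx2⟩ := h2
  refine ⟨fun t => (∑ j : Fin (T + 1 - (ℓ + Tf)), g₁ j • x1 (t + j)) +
    ∑ j : Fin (Tini + 1 - (ℓ + Tf)), g₂ j • x2 (t + j), fun t ht => ?_⟩
  dsimp only
  have hb1 : ∀ j : Fin (T + 1 - (ℓ + Tf)), t + (j : ℕ) < T := fun j => by
    have := j.2; omega
  have hb2 : ∀ j : Fin (Tini + 1 - (ℓ + Tf)), t + (j : ℕ) < Tini := fun j => by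
    have := j.2; omega
  constructor
  · have e1 : ∀ j : Fin (T + 1 - (ℓ + Tf)),
        x1 (t + 1 + (j : ℕ)) = A.mulVec (x1 (t + j)) + B.mulVec (ud' (t + j)) := fun j => by
      rw [show t + 1 + (j : ℕ) = t + (j : ℕ) + 1 by omega]
      exact (hx1 (t + j) (hb1 j)).1
    have e2 : ∀ j : Fin (Tini + 1 - (ℓ + Tf)),
        x2 (t + 1 + (j : ℕ)) = A.mulVec (x2 (t + j)) + B.mulVec (uini' (t + j)) := fun j => by
      rw [show t + 1 + (j : ℕ) = t + (j : ℕ) + 1 by omega]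
      exact (hx2 (t + j) (hb2 j)).1
    simp only [e1, e2]
    simp only [smul_add, Finset.sum_add_distrib, ← Matrix.mulVecLin_apply, map_add,
      map_sum, _root_.map_smul]
    abel
  · have e1 : ∀ j : Fin (T + 1 - (ℓ + Tf)),
        yd' (t + (j : ℕ)) = C.mulVec (x1 (t + j)) + D.mulVec (ud' (t + j)) := fun j =>
      (hx1 (t + j) (hb1 j)).2
    have e2 : ∀ j : Fin (Tini + 1 - (ℓ + Tf)),
        yini' (t + (j : ℕ)) = C.mulVec (x2 (t + j)) + D.mulVec (uini' (t + j)) := fun j =>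
      (hx2 (t + j) (hb2 j)).2
    simp only [e1, e2]
    simp only [smul_add, Finset.sum_add_distrib, ← Matrix.mulVecLin_apply, map_add,
      map_sum, _root_.map_smul]
    abel

end TrajPart

noncomputable section MainPart

open Matrix

variable {n' m p : ℕ} (A : Matrix (Fin n') (Fin n') ℝ) (B : Matrix (Fin n') (Fin m) ℝ)
  (C : Matrix (Fin p) (Fin n') ℝ) (D : Matrix (Fin p) (Fin m) ℝ)

/-- Extension of a finite signal to `ℕ` by zero. -/
def ext {q : ℕ} (T : ℕ) (v : Fin T → Fin q → ℝ) : ℕ → Fin q → ℝ :=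
  fun t => if h : t < T then v ⟨t, h⟩ else 0

/-- Linear combination of shifted signals. -/
def cmb {q T Tini ℓ Tf : ℕ} (g₁ : Fin (T + 1 - (ℓ + Tf)) → ℝ)
    (g₂ : Fin (Tini + 1 - (ℓ + Tf)) → ℝ) (w1 w2 : ℕ → Fin q → ℝ) : ℕ → Fin q → ℝ :=
  fun t => (∑ j : Fin (T + 1 - (ℓ + Tf)), g₁ j • w1 (t + j)) +
    ∑ j : Fin (Tini + 1 - (ℓ + Tf)), g₂ j • w2 (t + j)

/-- Gluing of two signals. -/
def glu {q : ℕ} (Tini ℓ : ℕ) (w1 w2 : ℕ → Fin q → ℝ) : ℕ → Fin q → ℝ :=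
  fun t => if t < Tini then w1 t else w2 (ℓ + (t - Tini))

lemma main_sys {T Tini Tf ℓ : ℕ} (hTini : ℓ ≤ Tini)
    {ud : Fin T → Fin m → ℝ} {yd : Fin T → Fin p → ℝ}
    {uini : Fin Tini → Fin m → ℝ} {yini : Fin Tini → Fin p → ℝ}
    {uf : Fin Tf → Fin m → ℝ} {yf : Fin Tf → Fin p → ℝ}
    (g₁ : Fin (T + 1 - (ℓ + Tf)) → ℝ) (g₂ : Fin (Tini + 1 - (ℓ + Tf)) → ℝ)
    (hu : ∀ i : Fin (ℓ + Tf),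
      (∑ j : Fin (T + 1 - (ℓ + Tf)),
          g₁ j • ud ⟨i + j, by have := j.2; have := i.2; omega⟩) +
      (∑ j : Fin (Tini + 1 - (ℓ + Tf)),
          g₂ j • uini ⟨i + j, by have := j.2; have := i.2; omega⟩) =
      Fin.append (fun r : Fin ℓ => uini ⟨Tini - ℓ + r, by have := r.2; have := hTini; omega⟩) uf i)
    (hy : ∀ i : Fin (ℓ + Tf),
      (∑ j : Fin (T + 1 - (ℓ + Tf)),
          g₁ j • yd ⟨i + j, by have := j.2; have := i.2; omega⟩) +
      (∑ j : Fin (Tini + 1 - (ℓ + Tf)),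
          g₂ j • yini ⟨i + j, by have := j.2; have := i.2; omega⟩) =
      Fin.append (fun r : Fin ℓ => yini ⟨Tini - ℓ + r, by have := r.2; have := hTini; omega⟩) yf i)
    (hlagle : lag A C ≤ ℓ)
    (htd : IsTraj A B C D T ud yd) (hti : IsTraj A B C D Tini uini yini) :
    IsTraj A B C D (Tini + Tf) (Fin.append uini uf) (Fin.append yini yf) ∧
    ∀ yf' : Fin Tf → Fin p → ℝ,
      IsTraj A B C D (Tini + Tf) (Fin.append uini uf) (Fin.append yini yf') → yf' = yf := by
  have hlagspec : ∀ v : Fin n' → ℝ, (∀ i < ℓ, (C * A ^ i).mulVec v = 0) →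
      ∀ k, (C * A ^ k).mulVec v = 0 := fun v hv k => lag_spec A C hlagle hv k
  have hd : NTraj A B C D T (ext T ud) (ext T yd) :=
    nTraj_of_isTraj A B C D (fun t => dif_pos t.isLt) (fun t => dif_pos t.isLt) htd
  have hini : NTraj A B C D Tini (ext Tini uini) (ext Tini yini) :=
    nTraj_of_isTraj A B C D (fun t => dif_pos t.isLt) (fun t => dif_pos t.isLt) hti
  have hcomb : NTraj A B C D (ℓ + Tf) (cmb g₁ g₂ (ext T ud) (ext Tini uini))
      (cmb g₁ g₂ (ext T yd) (ext Tini yini)) :=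
    comb A B C D g₁ g₂ _ _ _ _ hd hini
  -- evaluation of the combined trajectory
  have hueval : ∀ i : Fin (ℓ + Tf), cmb g₁ g₂ (ext T ud) (ext Tini uini) (i : ℕ) =
      Fin.append (fun r : Fin ℓ => uini ⟨Tini - ℓ + r, by have := r.2; have := hTini; omega⟩) uf i := by
    intro i
    rw [← hu i]
    simp only [cmb, ext]
    congr 1
    · exact Finset.sum_congr rfl fun j _ => by
        rw [dif_pos (show (i : ℕ) + (j : ℕ) < T by have := j.2; have := i.2; omega)]
    · exact Finset.sum_congr rfl fun j _ => by
        rw [dif_pos (show (i : ℕ) + (j : ℕ) < Tini by have := j.2; have := i.2; omega)]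
  have hyeval : ∀ i : Fin (ℓ + Tf), cmb g₁ g₂ (ext T yd) (ext Tini yini) (i : ℕ) =
      Fin.append (fun r : Fin ℓ => yini ⟨Tini - ℓ + r, by have := r.2; have := hTini; omega⟩) yf i := by
    intro i
    rw [← hy i]
    simp only [cmb, ext]
    congr 1
    · exact Finset.sum_congr rfl fun j _ => by
        rw [dif_pos (show (i : ℕ) + (j : ℕ) < T by have := j.2; have := i.2; omega)]
    · exact Finset.sum_congr rfl fun j _ => by
        rw [dif_pos (show (i : ℕ) + (j : ℕ) < Tini by have := j.2; have := i.2; omega)]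
  -- matching on the initial window
  have hmu : ∀ i, i < ℓ → cmb g₁ g₂ (ext T ud) (ext Tini uini) i =
      ext Tini uini (Tini - ℓ + i) := by
    intro i hi
    have h1 := hueval ⟨i, by omega⟩
    have h2 : ext Tini uini (Tini - ℓ + i) = uini ⟨Tini - ℓ + i, by omega⟩ :=
      dif_pos (by omega)
    rw [h2]
    exact h1.trans (append_left' _ uf ⟨i, by omega⟩ hi)
  have hmy : ∀ i, i < ℓ → cmb g₁ g₂ (ext T yd) (ext Tini yini) i =
      ext Tini yini (Tini - ℓ + i) := by
    intro i hi
    have h1 := hyeval ⟨i, by omega⟩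
    have h2 : ext Tini yini (Tini - ℓ + i) = yini ⟨Tini - ℓ + i, by omega⟩ :=
      dif_pos (by omega)
    rw [h2]
    exact h1.trans (append_left' _ yf ⟨i, by omega⟩ hi)
  have hglue : NTraj A B C D (Tini + Tf)
      (glu Tini ℓ (ext Tini uini) (cmb g₁ g₂ (ext T ud) (ext Tini uini)))
      (glu Tini ℓ (ext Tini yini) (cmb g₁ g₂ (ext T yd) (ext Tini yini))) :=
    glue A B C D hTini hlagspec _ _ hini _ _ hcomb hmu hmy
  -- the glued input/output equals the appended one
  have hUapp : ∀ t : Fin (Tini + Tf),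
      glu Tini ℓ (ext Tini uini) (cmb g₁ g₂ (ext T ud) (ext Tini uini)) (t : ℕ) =
      Fin.append uini uf t := by
    intro t
    by_cases h' : (t : ℕ) < Tini
    · rw [glu, if_pos h']
      exact (dif_pos h').trans (append_left' uini uf t h').symm
    · rw [glu, if_neg h']
      have h1 := hueval ⟨ℓ + ((t : ℕ) - Tini), by have := t.2; omega⟩
      refine h1.trans ?_
      have h2 := append_right'
        (fun r : Fin ℓ => uini ⟨Tini - ℓ + r, by have := r.2; have := hTini; omega⟩) uf
        ⟨ℓ + ((t : ℕ) - Tini), by have := t.2; omega⟩ (Nat.le_add_right _ _)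
      refine h2.trans ?_
      rw [append_right' uini uf t (by omega)]
      exact congrArg uf (Fin.ext
        (show ℓ + ((t : ℕ) - Tini) - ℓ = (t : ℕ) - Tini by omega))
  have hYapp : ∀ t : Fin (Tini + Tf),
      glu Tini ℓ (ext Tini yini) (cmb g₁ g₂ (ext T yd) (ext Tini yini)) (t : ℕ) =
      Fin.append yini yf t := by
    intro t
    by_cases h' : (t : ℕ) < Tini
    · rw [glu, if_pos h']
      exact (dif_pos h').trans (append_left' yini yf t h').symm
    · rw [glu, if_neg h']
      have h1 := hyeval ⟨ℓ + ((t : ℕ) - Tini), by have := t.2; omega⟩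
      refine h1.trans ?_
      have h2 := append_right'
        (fun r : Fin ℓ => yini ⟨Tini - ℓ + r, by have := r.2; have := hTini; omega⟩) yf
        ⟨ℓ + ((t : ℕ) - Tini), by have := t.2; omega⟩ (Nat.le_add_right _ _)
      refine h2.trans ?_
      rw [append_right' yini yf t (by omega)]
      exact congrArg yf (Fin.ext
        (show ℓ + ((t : ℕ) - Tini) - ℓ = (t : ℕ) - Tini by omega))
  refine ⟨isTraj_of_nTraj A B C D hUapp hYapp hglue, ?_⟩
  -- uniqueness
  intro yf' htr'
  have h2' : NTraj A B C D (Tini + Tf)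
      (fun t => if h : t < Tini + Tf then Fin.append uini uf ⟨t, h⟩ else 0)
      (fun t => if h : t < Tini + Tf then Fin.append yini yf' ⟨t, h⟩ else 0) :=
    nTraj_of_isTraj A B C D (fun t => dif_pos t.isLt) (fun t => dif_pos t.isLt) htr'
  have key := out_unique A B C D hlagspec (Tini + Tf) (Tini - ℓ) (by omega)
    (glu Tini ℓ (ext Tini uini) (cmb g₁ g₂ (ext T ud) (ext Tini uini)))
    (fun t => if h : t < Tini + Tf then Fin.append uini uf ⟨t, h⟩ else 0)
    (glu Tini ℓ (ext Tini yini) (cmb g₁ g₂ (ext T yd) (ext Tini yini)))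
    (fun t => if h : t < Tini + Tf then Fin.append yini yf' ⟨t, h⟩ else 0)
    (fun t ht => by
      show _ = if h : t < Tini + Tf then Fin.append uini uf ⟨t, h⟩ else 0
      rw [dif_pos ht]
      exact hUapp ⟨t, ht⟩)
    hglue h2'
    (fun t ht => by
      have htt : t < Tini + Tf := by omega
      have ht' : t < Tini := by omega
      show _ = if h : t < Tini + Tf then Fin.append yini yf' ⟨t, h⟩ else 0
      rw [dif_pos htt]
      exact (hYapp ⟨t, htt⟩).trans
        ((append_left' yini yf ⟨t, htt⟩ ht').trans
          (append_left' yini yf' ⟨t, htt⟩ ht').symm))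
  funext s
  have hs : Tini + (s : ℕ) < Tini + Tf := by have := s.2; omega
  have l0 := key (Tini + (s : ℕ)) hs
  have l1 := hYapp ⟨Tini + (s : ℕ), hs⟩
  have r1 : Fin.append yini yf ⟨Tini + (s : ℕ), hs⟩ = yf s :=
    (append_right' yini yf ⟨Tini + (s : ℕ), hs⟩ (Nat.le_add_right _ _)).trans
      (congrArg yf (Fin.ext (show Tini + (s : ℕ) - Tini = (s : ℕ) by omega)))
  have r2 : Fin.append yini yf' ⟨Tini + (s : ℕ), hs⟩ = yf' s :=
    (append_right' yini yf' ⟨Tini + (s : ℕ), hs⟩ (Nat.le_add_right _ _)).trans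
      (congrArg yf' (Fin.ext (show Tini + (s : ℕ) - Tini = (s : ℕ) by omega)))
  have l2 : (fun t => if h : t < Tini + Tf then Fin.append yini yf' ⟨t, h⟩ else 0)
      (Tini + (s : ℕ)) = Fin.append yini yf' ⟨Tini + (s : ℕ), hs⟩ := dif_pos hs
  exact r2.symm.trans (l2.symm.trans (l0.symm.trans (l1.trans r1)))

end MainPart

end Pred

/-- If the stacked vector consisting of the last `ℓ` samples of the initial trajectory
followed by the future input/output can be written as a combination of the columns of the
depth-`(ℓ + Tf)` Hankel matrices of the data and of the initial trajectory, then every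
explaining system has `(uini·uf, yini·yf)` as a trajectory, `yf` is the unique such
output for each explaining system, and the data is informative for unique prediction. -/
theorem predict_informative {m p : ℕ} (L N T Tini Tf ℓ : ℕ) (hTf : 1 ≤ Tf)
    (ud : Fin T → Fin m → ℝ) (yd : Fin T → Fin p → ℝ)
    (uini : Fin Tini → Fin m → ℝ) (yini : Fin Tini → Fin p → ℝ)
    (uf : Fin Tf → Fin m → ℝ)
    (hTini : ℓ ≤ Tini)
    (hℓ : ∀ (n' : ℕ) (A' : Matrix (Fin n') (Fin n') ℝ) (B' : Matrix (Fin n') (Fin m) ℝ)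
      (C' : Matrix (Fin p) (Fin n') ℝ) (D' : Matrix (Fin p) (Fin m) ℝ),
      Explaining L N T Tini ud yd uini yini A' B' C' D' → lag A' C' ≤ ℓ)
    (yf : Fin Tf → Fin p → ℝ)
    (g₁ : Fin (T + 1 - (ℓ + Tf)) → ℝ)
    (g₂ : Fin (Tini + 1 - (ℓ + Tf)) → ℝ)
    (hu : ∀ i : Fin (ℓ + Tf),
      (∑ j : Fin (T + 1 - (ℓ + Tf)),
          g₁ j • ud ⟨i + j, by have := i.2; have := j.2; omega⟩) +
      (∑ j : Fin (Tini + 1 - (ℓ + Tf)),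
          g₂ j • uini ⟨i + j, by have := i.2; have := j.2; omega⟩) =
      Fin.append (fun r : Fin ℓ => uini ⟨Tini - ℓ + r, by have := r.2; omega⟩) uf i)
    (hy : ∀ i : Fin (ℓ + Tf),
      (∑ j : Fin (T + 1 - (ℓ + Tf)),
          g₁ j • yd ⟨i + j, by have := i.2; have := j.2; omega⟩) +
      (∑ j : Fin (Tini + 1 - (ℓ + Tf)),
          g₂ j • yini ⟨i + j, by have := i.2; have := j.2; omega⟩) =
      Fin.append (fun r : Fin ℓ => yini ⟨Tini - ℓ + r, by have := r.2; omega⟩) yf i) :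
    (∀ (n' : ℕ) (A' : Matrix (Fin n') (Fin n') ℝ) (B' : Matrix (Fin n') (Fin m) ℝ)
        (C' : Matrix (Fin p) (Fin n') ℝ) (D' : Matrix (Fin p) (Fin m) ℝ),
        Explaining L N T Tini ud yd uini yini A' B' C' D' →
        IsTraj A' B' C' D' (Tini + Tf) (Fin.append uini uf) (Fin.append yini yf) ∧
        ∀ yf' : Fin Tf → Fin p → ℝ,
          IsTraj A' B' C' D' (Tini + Tf) (Fin.append uini uf) (Fin.append yini yf') →
          yf' = yf) ∧
    Informative L N T Tini Tf ud yd uini yini uf := by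
  have main : ∀ (n' : ℕ) (A' : Matrix (Fin n') (Fin n') ℝ) (B' : Matrix (Fin n') (Fin m) ℝ)
      (C' : Matrix (Fin p) (Fin n') ℝ) (D' : Matrix (Fin p) (Fin m) ℝ),
      Explaining L N T Tini ud yd uini yini A' B' C' D' →
      IsTraj A' B' C' D' (Tini + Tf) (Fin.append uini uf) (Fin.append yini yf) ∧
      ∀ yf' : Fin Tf → Fin p → ℝ,
        IsTraj A' B' C' D' (Tini + Tf) (Fin.append uini uf) (Fin.append yini yf') →
        yf' = yf := by
    intro n' A' B' C' D' hE
    exact Pred.main_sys A' B' C' D' hTini g₁ g₂ hu hy (hℓ n' A' B' C' D' hE)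
      hE.2.2.1 hE.2.2.2
  refine ⟨main, ?_, ?_⟩
  · intro n' A' B' C' D' hE
    obtain ⟨hex, hun⟩ := main n' A' B' C' D' hE
    exact ⟨yf, hex, hun⟩
  · exact ⟨yf, fun n' A' B' C' D' hE => (main n' A' B' C' D' hE).1⟩
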